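/- Let d ≥ 2, let K be a pure (d−1)-dimensional simplicial complex on [n], let p : [n] → ℝ^{d−1} be any map, and let z be a real-valued (d−1)-chain of K with ∂z = 0. Then 𝔙(K,p)·z = 0; that is, for every vertex v ∈ [n] and every i ∈ {1,…,d−1}, the sum over all (d−1)-faces σ of K of 𝔙(K,p)_{(v,i),σ}·z_σ equals 0. -/

import Mathlib

open scoped BigOperators

section Defs

variable {α : Type*}

/-- A family of finite sets is a simplicial complex if it is closed under taking subsets. -/
def IsComplex (K : Finset (Finset α)) : Prop :=
  ∀ σ ∈ K, ∀ τ ⊆ σ, τ ∈ K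

/-- `K` is pure with all facets of cardinality `d` (i.e. pure `(d-1)`-dimensional). -/
def PureCx (d : ℕ) (K : Finset (Finset α)) : Prop :=
  (∀ σ ∈ K, σ.card ≤ d) ∧ ∀ σ ∈ K, ∃ τ ∈ K, σ ⊆ τ ∧ τ.card = d

/-- `K` is `(d-1)`-dimensional: the largest faces have `d` elements. -/
def DimPred (d : ℕ) (K : Finset (Finset α)) : Prop :=
  (∀ σ ∈ K, σ.card ≤ d) ∧ ∃ σ ∈ K, σ.card = d

/-- The increasing embedding of `Fin (d-1)` into `Fin d` skipping `r`. -/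
def skipF {d : ℕ} (r : Fin d) (k : Fin (d - 1)) : Fin d :=
  if (k : ℕ) < (r : ℕ) then ⟨(k : ℕ), by have := k.isLt; omega⟩
  else ⟨(k : ℕ) + 1, by have := k.isLt; omega⟩

/-- The cofactor `C_{r,c}(M)` (0-indexed). -/
noncomputable def cofactor {d : ℕ} (M : Matrix (Fin d) (Fin d) ℝ) (r c : Fin d) : ℝ :=
  (-1 : ℝ) ^ ((r : ℕ) + (c : ℕ)) * (M.submatrix (skipF r) (skipF c)).det

/-- The matrix `M_{p,σ}` whose `j`-th column is `(p(v_j), 1)`, `v_j` the `j`-th smallest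
element of `σ`. -/
noncomputable def faceMat [LinearOrder α] (d : ℕ) (p : α → Fin (d - 1) → ℝ)
    (σ : Finset α) (hσ : σ.card = d) : Matrix (Fin d) (Fin d) ℝ :=
  fun i j => if h : (i : ℕ) < d - 1 then p (σ.orderEmbOfFin hσ j) ⟨i, h⟩ else 1

/-- The volume-rigidity matrix `𝔙(K,p)`. -/
noncomputable def volMatrix [LinearOrder α] (d : ℕ) (K : Finset (Finset α))
    (p : α → Fin (d - 1) → ℝ) :
    Matrix (α × Fin (d - 1)) {σ : Finset α // σ ∈ K ∧ σ.card = d} ℝ :=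
  fun vi σ =>
    if h : vi.1 ∈ σ.1 then
      cofactor (faceMat d p σ.1 σ.2.2) (Fin.castLE (Nat.sub_le d 1) vi.2)
        ((σ.1.orderIsoOfFin σ.2.2).symm ⟨vi.1, h⟩)
    else 0

/-- `p : V → ℝ^{d-1}` is generic: its coordinates are algebraically independent over `ℚ`. -/
def GenericEmb (d : ℕ) (V : Finset α) (p : α → Fin (d - 1) → ℝ) : Prop :=
  AlgebraicIndependent ℚ (fun x : {a // a ∈ V} × Fin (d - 1) => p x.1.1 x.2)

/-- `K`, with vertex set `V`, is volume-rigid. -/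
def VolumeRigid [Fintype α] [LinearOrder α] (d : ℕ) (V : Finset α)
    (K : Finset (Finset α)) : Prop :=
  ∀ p : α → Fin (d - 1) → ℝ, GenericEmb d V p →
    (volMatrix d K p).rank = (d - 1) * V.card - (d ^ 2 - d - 1)

/-- `sign(τ,σ) = (-1)^j` where the unique element of `σ \ τ` is the `j`-th smallest
element of `σ` (1-based). -/
def faceSgn [LinearOrder α] (τ σ : Finset α) : ℤ :=
  if h : (σ \ τ).card = 1 then
    (-1 : ℤ) ^
      (((σ.sort (· ≤ ·)).idxOf ((σ \ τ).min' (Finset.card_pos.mp (by omega)))) + 1)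
  else 0

/-- The boundary of the integral `(d-1)`-chain `z` of `K` vanishes. -/
def BoundaryZeroZ [LinearOrder α] (d : ℕ) (K : Finset (Finset α)) (z : Finset α → ℤ) : Prop :=
  ∀ τ : Finset α, τ.card = d - 1 →
    ∑ σ ∈ K.filter (fun σ => σ.card = d ∧ τ ⊆ σ), faceSgn τ σ * z σ = 0

/-- The boundary of the real `(d-1)`-chain `z` of `K` vanishes. -/
def BoundaryZeroR [LinearOrder α] (d : ℕ) (K : Finset (Finset α)) (z : Finset α → ℝ) : Prop :=
  ∀ τ : Finset α, τ.card = d - 1 →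
    ∑ σ ∈ K.filter (fun σ => σ.card = d ∧ τ ⊆ σ), (faceSgn τ σ : ℝ) * z σ = 0

/-- `K` is a minimal cycle over `ℤ`. -/
def IsMinimalCycleZ [LinearOrder α] (d : ℕ) (K : Finset (Finset α)) : Prop :=
  (∃ z : Finset α → ℤ, (∀ σ, ¬(σ ∈ K ∧ σ.card = d) → z σ = 0) ∧
      BoundaryZeroZ d K z ∧ ∀ σ ∈ K, σ.card = d → z σ ≠ 0) ∧
  ∀ z : Finset α → ℤ, (∀ σ, ¬(σ ∈ K ∧ σ.card = d) → z σ = 0) →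
    BoundaryZeroZ d K z → z ≠ 0 → ∀ σ ∈ K, σ.card = d → z σ ≠ 0

/-- `K` is `(d-1, d²-d-1)`-sparse on vertex set `V`. -/
def Sparse [DecidableEq α] (d : ℕ) (V : Finset α) (K : Finset (Finset α)) : Prop :=
  ∀ A ⊆ V, d ≤ A.card →
    (K.filter (fun σ => σ.card = d ∧ σ ⊆ A)).card ≤ (d - 1) * A.card - (d ^ 2 - d - 1)

/-- `K` is `(d-1, d²-d-1)`-tight on vertex set `V`. -/
def Tight [DecidableEq α] (d : ℕ) (V : Finset α) (K : Finset (Finset α)) : Prop :=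
  Sparse d V K ∧
    (K.filter (fun σ => σ.card = d)).card = (d - 1) * V.card - (d ^ 2 - d - 1)

end Defs

section Shifting

/-- The partial order `σ ≤_p τ`: equal cardinalities and the `i`-th smallest element of `σ`
is at most the `i`-th smallest element of `τ`, for every `i`. -/
def pLE {n : ℕ} (σ τ : Finset (Fin n)) : Prop :=
  List.Forall₂ (· ≤ ·) (σ.sort (· ≤ ·)) (τ.sort (· ≤ ·))

/-- The strict partial order `σ <_p τ`. -/
def pLT {n : ℕ} (σ τ : Finset (Fin n)) : Prop := pLE σ τ ∧ σ ≠ τ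

/-- `f_σ = f_{σ_1} ∧ ⋯ ∧ f_{σ_k}` in the exterior algebra of `ℝ^n`. -/
noncomputable def extWedge {n : ℕ} (f : Fin n → (Fin n → ℝ)) (σ : Finset (Fin n)) :
    ExteriorAlgebra ℝ (Fin n → ℝ) :=
  ((σ.sort (· ≤ ·)).map (fun i => ExteriorAlgebra.ι ℝ (f i))).prod

/-- The standard basis of `ℝ^n`. -/
noncomputable def stdVec (n : ℕ) : Fin n → (Fin n → ℝ) := fun i => Pi.single i 1

/-- The subspace spanned by `{e_τ : τ ∉ K, |τ| = k}`. -/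
noncomputable def faceIdeal {n : ℕ} (K : Finset (Finset (Fin n))) (k : ℕ) :
    Submodule ℝ (ExteriorAlgebra ℝ (Fin n → ℝ)) :=
  Submodule.span ℝ
    {x | ∃ τ : Finset (Fin n), τ ∉ K ∧ τ.card = k ∧ x = extWedge (stdVec n) τ}

/-- The quotient map `q`. -/
noncomputable def qMap {n : ℕ} (K : Finset (Finset (Fin n))) (k : ℕ) :
    ExteriorAlgebra ℝ (Fin n → ℝ) → ExteriorAlgebra ℝ (Fin n → ℝ) ⧸ faceIdeal K k :=
  fun x => Submodule.Quotient.mk x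

/-- The shifted family `Δ^<(K)` associated with a strict order `lt` on subsets of `[n]`,
computed with respect to the basis `f`. -/
def DeltaLt {n : ℕ} (K : Finset (Finset (Fin n))) (f : Fin n → (Fin n → ℝ))
    (lt : Finset (Fin n) → Finset (Fin n) → Prop) : Set (Finset (Fin n)) :=
  {σ | qMap K σ.card (extWedge f σ) ∉
    Submodule.span ℝ (qMap K σ.card '' (extWedge f '' {τ | lt τ σ ∧ τ.card = σ.card}))}

/-- `Δ^p(K)`, computed with respect to the basis `f`. -/
def DeltaP {n : ℕ} (K : Finset (Finset (Fin n))) (f : Fin n → (Fin n → ℝ)) :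
    Set (Finset (Fin n)) := DeltaLt K f pLT

/-- `f` is a generic basis of `ℝ^n`: it is a basis, `f_1 = (1,…,1)`, and the coordinates of
`f_2, …, f_n` are algebraically independent over `ℚ`. -/
def GenericBasis {n : ℕ} (f : Fin n → (Fin n → ℝ)) : Prop :=
  (∃ b : Module.Basis (Fin n) ℝ (Fin n → ℝ), ⇑b = f) ∧
  (∀ i : Fin n, (i : ℕ) = 0 → f i = 1) ∧
  AlgebraicIndependent ℚ (fun x : {i : Fin n // (i : ℕ) ≠ 0} × Fin n => f x.1.1 x.2)

/-- The set `{1,3,4,…,d,n}` (1-based), i.e. `{0,2,3,…,d-1,n-1}` as a subset of `Fin n`. -/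
def sigma0 (d n : ℕ) : Finset (Fin n) :=
  Finset.univ.filter (fun i : Fin n =>
    (i : ℕ) = 0 ∨ (2 ≤ (i : ℕ) ∧ (i : ℕ) + 1 ≤ d) ∨ (i : ℕ) + 1 = n)

end Shifting

section Aux
variable {α : Type*} [LinearOrder α] {m : ℕ}

lemma skipF_eq_succAbove (r : Fin (m+1)) (k : Fin m) :
    skipF (d := m+1) r k = r.succAbove k := by
  unfold skipF Fin.succAbove
  rcases lt_or_ge (k : ℕ) (r : ℕ) with h | h
  · rw [if_pos h, if_pos (by simpa [Fin.lt_def] using h)]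
    rfl
  · rw [if_neg (by omega), if_neg (by simp [Fin.lt_def]; omega)]
    rfl

lemma faceSgn_erase (σ : Finset α) {k : ℕ} (hσ : σ.card = k) (v : α) (hv : v ∈ σ) :
    faceSgn (σ.erase v) σ =
      (-1) ^ ((((σ.orderIsoOfFin hσ).symm ⟨v, hv⟩ : Fin k) : ℕ) + 1) := by
  have h1 : σ \ σ.erase v = {v} := Finset.sdiff_erase_self hv
  rw [faceSgn, dif_pos (by rw [h1]; simp)]
  congr 1
  have h2 : (σ \ σ.erase v).min' (by rw [h1]; simp) = v := by
    simp [h1]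
  rw [h2, Finset.orderIsoOfFin_symm_apply]

lemma erase_orderEmbOfFin (σ : Finset α) (hσ : σ.card = m + 1) (v : α) (hv : v ∈ σ)
    (k : Fin m) :
    σ.orderEmbOfFin hσ (((σ.orderIsoOfFin hσ).symm ⟨v, hv⟩).succAbove k) =
      (σ.erase v).orderEmbOfFin (by rw [Finset.card_erase_of_mem hv, hσ]; rfl) k := by
  set c := (σ.orderIsoOfFin hσ).symm ⟨v, hv⟩ with hc
  have hvc : σ.orderEmbOfFin hσ c = v := by
    rw [← Finset.coe_orderIsoOfFin_apply]
    rw [hc, OrderIso.apply_symm_apply]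
  have hmono : StrictMono (fun k : Fin m => σ.orderEmbOfFin hσ (c.succAbove k)) :=
    (σ.orderEmbOfFin hσ).strictMono.comp (Fin.strictMono_succAbove c)
  have hmem : ∀ k : Fin m, σ.orderEmbOfFin hσ (c.succAbove k) ∈ σ.erase v := by
    intro k
    refine Finset.mem_erase.2 ⟨?_, Finset.orderEmbOfFin_mem _ _ _⟩
    rw [← hvc]
    exact fun h => Fin.succAbove_ne c k ((σ.orderEmbOfFin hσ).injective h)
  exact congrFun (Finset.orderEmbOfFin_unique _ hmem hmono) k

end Aux
section Aux2
variable {α : Type*} [LinearOrder α] {m : ℕ}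

/-- The `(d-1)×(d-1)` matrix built from `τ` (columns) and rows `≠ i`. -/
noncomputable def DvM (p : α → Fin m → ℝ) (i : Fin m) (τ : Finset α) (hτ : τ.card = m) :
    Matrix (Fin m) (Fin m) ℝ :=
  fun r k =>
    if h : ((((Fin.castLE (Nat.sub_le (m+1) 1) i).succAbove r) : Fin (m+1)) : ℕ) < m + 1 - 1
    then p (τ.orderEmbOfFin hτ k) ⟨_, h⟩ else 1

noncomputable def Dv (p : α → Fin m → ℝ) (i : Fin m) (τ : Finset α) : ℝ :=
  if hτ : τ.card = m then (DvM p i τ hτ).det else 0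

lemma Dv_eq (p : α → Fin m → ℝ) (i : Fin m) (τ : Finset α) (hτ : τ.card = m) :
    Dv p i τ = (DvM p i τ hτ).det := dif_pos hτ

lemma submatrix_faceMat (p : α → Fin m → ℝ) (i : Fin m) (σ : Finset α)
    (hσ : σ.card = m + 1) (v : α) (hv : v ∈ σ) :
    (faceMat (m+1) p σ hσ).submatrix (skipF (Fin.castLE (Nat.sub_le (m+1) 1) i))
        (skipF ((σ.orderIsoOfFin hσ).symm ⟨v, hv⟩)) =
      DvM p i (σ.erase v) (by rw [Finset.card_erase_of_mem hv, hσ]; rfl) := by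
  ext r k
  rw [Matrix.submatrix_apply, skipF_eq_succAbove, skipF_eq_succAbove]
  unfold faceMat DvM
  rw [erase_orderEmbOfFin σ hσ v hv k]

end Aux2
section Aux3
variable {α : Type*} [LinearOrder α] {m : ℕ}

lemma volMatrix_apply_mem (K : Finset (Finset α)) (p : α → Fin m → ℝ) (v : α) (i : Fin m)
    (σ : Finset α) (hσK : σ ∈ K) (hσ : σ.card = m + 1) (hv : v ∈ σ) :
    volMatrix (m+1) K p (v, i) ⟨σ, hσK, hσ⟩ =
      (-1 : ℝ) ^ ((i : ℕ) + (((σ.orderIsoOfFin hσ).symm ⟨v, hv⟩ : Fin (m+1)) : ℕ)) *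
        Dv p i (σ.erase v) := by
  rw [volMatrix]
  rw [dif_pos hv, cofactor, submatrix_faceMat p i σ hσ v hv,
    Dv_eq p i (σ.erase v) (by rw [Finset.card_erase_of_mem hv, hσ]; rfl)]
  rfl

lemma volMatrix_apply_not_mem (K : Finset (Finset α)) (p : α → Fin m → ℝ) (v : α) (i : Fin m)
    (σ : {σ : Finset α // σ ∈ K ∧ σ.card = m+1}) (hv : v ∉ σ.1) :
    volMatrix (m+1) K p (v, i) σ = 0 := dif_neg hv

end Aux3
section Aux4
variable {α : Type*} [LinearOrder α] {m : ℕ}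

lemma sum_faceSgn_Dv (p : α → Fin m → ℝ) (i : Fin m) (σ : Finset α) (hσ : σ.card = m + 1) :
    ∑ w ∈ σ, (faceSgn (σ.erase w) σ : ℝ) * Dv p i (σ.erase w) = 0 := by
  set i' : Fin (m+1) := Fin.castLE (Nat.sub_le (m+1) 1) i with hi'
  have key : ∀ j : Fin (m+1),
      (faceSgn (σ.erase (σ.orderEmbOfFin hσ j)) σ : ℝ) *
          Dv p i (σ.erase (σ.orderEmbOfFin hσ j)) =
      (-1) ^ ((j : ℕ) + 1) *
        Matrix.det ((faceMat (m+1) p σ hσ).submatrix (skipF i') (skipF j)) := by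
    intro j
    have hmem : σ.orderEmbOfFin hσ j ∈ σ := Finset.orderEmbOfFin_mem σ hσ j
    have hsymm : (σ.orderIsoOfFin hσ).symm ⟨σ.orderEmbOfFin hσ j, hmem⟩ = j := by
      have h0 : (⟨σ.orderEmbOfFin hσ j, hmem⟩ : {x // x ∈ σ}) = σ.orderIsoOfFin hσ j :=
        Subtype.ext (Finset.coe_orderIsoOfFin_apply σ hσ j).symm
      rw [h0, OrderIso.symm_apply_apply]
    rw [faceSgn_erase σ hσ _ hmem, hsymm,
      Dv_eq _ _ _ (by rw [Finset.card_erase_of_mem hmem, hσ]; rfl),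
      ← submatrix_faceMat p i σ hσ _ hmem, hsymm]
    push_cast
    ring_nf
    rfl
  have h1 : ∑ w ∈ σ, (faceSgn (σ.erase w) σ : ℝ) * Dv p i (σ.erase w) =
      ∑ j : Fin (m+1), (faceSgn (σ.erase (σ.orderEmbOfFin hσ j)) σ : ℝ) *
        Dv p i (σ.erase (σ.orderEmbOfFin hσ j)) := by
    rw [← Finset.sum_coe_sort σ]
    refine Fintype.sum_equiv (σ.orderIsoOfFin hσ).symm.toEquiv _ _ (fun x => ?_)
    have h3 : σ.orderEmbOfFin hσ ((σ.orderIsoOfFin hσ).symm x) = (x : α) := by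
      rw [← Finset.coe_orderIsoOfFin_apply, OrderIso.apply_symm_apply]
    rw [show ((σ.orderIsoOfFin hσ).symm.toEquiv x) = ((σ.orderIsoOfFin hσ).symm x) from rfl, h3]
  -- the bordered matrix with a repeated row
  set M := Matrix.updateRow (faceMat (m+1) p σ hσ) i' (fun _ => (1:ℝ)) with hM
  have hne : i' ≠ Fin.last m := by
    intro h
    have : (i : ℕ) < m + 1 - 1 := i.2
    have h2 : (i' : ℕ) = m := by rw [h]; rfl
    simp only [hi', Fin.coe_castLE] at h2
    omega
  have hrow : M i' = M (Fin.last m) := by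
    funext j
    rw [hM, Matrix.updateRow_self, Matrix.updateRow_ne (Ne.symm hne)]
    show (1:ℝ) = faceMat (m+1) p σ hσ (Fin.last m) j
    rw [faceMat, dif_neg (by show ¬ (m < m + 1 - 1); omega)]
  have hdet : M.det = 0 := Matrix.det_zero_of_row_eq hne hrow
  have hsub : ∀ j : Fin (m+1), M.submatrix i'.succAbove j.succAbove =
      (faceMat (m+1) p σ hσ).submatrix (skipF i') (skipF j) := by
    intro j
    ext r k
    rw [Matrix.submatrix_apply, Matrix.submatrix_apply, skipF_eq_succAbove, skipF_eq_succAbove,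
      hM, Matrix.updateRow_ne (Fin.succAbove_ne i' r)]
  have hexp := Matrix.det_succ_row M i'
  rw [hdet] at hexp
  have hexp2 : ∑ j : Fin (m+1),
      (-1:ℝ) ^ ((i:ℕ) + (j:ℕ)) *
        Matrix.det ((faceMat (m+1) p σ hσ).submatrix (skipF i') (skipF j)) = 0 := by
    rw [eq_comm] at hexp
    calc ∑ j : Fin (m+1), (-1:ℝ) ^ ((i:ℕ) + (j:ℕ)) *
          Matrix.det ((faceMat (m+1) p σ hσ).submatrix (skipF i') (skipF j))
        = ∑ j : Fin (m+1), (-1:ℝ) ^ ((i':ℕ) + (j:ℕ)) * M i' j *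
          Matrix.det (M.submatrix i'.succAbove j.succAbove) := by
          refine Finset.sum_congr rfl (fun j _ => ?_)
          rw [hsub j, hM, Matrix.updateRow_self]
          show _ = (-1:ℝ) ^ ((i':ℕ) + (j:ℕ)) * 1 * _
          rw [mul_one]
          rfl
      _ = 0 := hexp
  rw [h1]
  calc ∑ j : Fin (m+1), (faceSgn (σ.erase (σ.orderEmbOfFin hσ j)) σ : ℝ) *
        Dv p i (σ.erase (σ.orderEmbOfFin hσ j))
      = ∑ j : Fin (m+1), (-(-1:ℝ)^(i:ℕ)) * ((-1) ^ ((i:ℕ) + (j:ℕ)) *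
          Matrix.det ((faceMat (m+1) p σ hσ).submatrix (skipF i') (skipF j))) := by
        refine Finset.sum_congr rfl (fun j _ => ?_)
        rw [key j, ← mul_assoc]
        congr 1
        have h2 : (-1:ℝ)^(i:ℕ) * (-1)^(i:ℕ) = 1 := by rw [← mul_pow]; norm_num
        calc (-1:ℝ)^((j:ℕ)+1) = -(1 * (-1)^(j:ℕ)) := by rw [pow_succ]; ring
          _ = -((-1:ℝ)^(i:ℕ) * (-1)^(i:ℕ) * (-1)^(j:ℕ)) := by rw [h2]
          _ = -(-1:ℝ)^(i:ℕ) * ((-1)^((i:ℕ)+(j:ℕ))) := by rw [pow_add]; ring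
    _ = 0 := by rw [← Finset.mul_sum, hexp2, mul_zero]
end Aux4
section Core
variable {α : Type*} [LinearOrder α] [Fintype α] {m : ℕ}

lemma core_cycle (K : Finset (Finset α)) (p : α → Fin m → ℝ) (z : Finset α → ℝ)
    (hz : BoundaryZeroR (m+1) K z) (v : α) (i : Fin m)
    [Fintype {σ : Finset α // σ ∈ K ∧ σ.card = m+1}] :
    ∑ σ : {σ : Finset α // σ ∈ K ∧ σ.card = m+1},
      volMatrix (m+1) K p (v, i) σ * z σ.1 = 0 := by
  set F := K.filter (fun σ => σ.card = m + 1) with hF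
  set g : Finset α → ℝ := fun σ =>
    if h : v ∈ σ then (faceSgn (σ.erase v) σ : ℝ) * Dv p i (σ.erase v) * z σ else 0 with hg
  set T := (Finset.powersetCard m (Finset.univ : Finset α)).filter (fun τ => v ∉ τ) with hT
  -- the sum of boundary conditions
  have hB : ∑ τ ∈ T, Dv p i τ *
      ∑ σ ∈ K.filter (fun σ => σ.card = m+1 ∧ τ ⊆ σ), (faceSgn τ σ : ℝ) * z σ = 0 := by
    refine Finset.sum_eq_zero (fun τ hτ => ?_)
    have hcard : τ.card = m := by
      have := (Finset.mem_filter.1 hτ).1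
      exact (Finset.mem_powersetCard.1 this).2
    rw [hz τ hcard, mul_zero]
  -- rewrite as a double sum and swap
  have hB2 : ∑ σ ∈ F, ∑ τ ∈ T,
      (if τ ⊆ σ then Dv p i τ * ((faceSgn τ σ : ℝ) * z σ) else 0) = 0 := by
    rw [Finset.sum_comm]
    refine Eq.trans (Finset.sum_congr rfl (fun τ _ => ?_)) hB
    have hKfil : K.filter (fun σ => σ.card = m+1 ∧ τ ⊆ σ) = F.filter (fun σ => τ ⊆ σ) := by
      rw [hF, Finset.filter_filter]
    conv_rhs => rw [hKfil, Finset.mul_sum, Finset.sum_filter]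
  -- identify each inner sum with g σ
  have hinner : ∀ σ ∈ F, ∑ τ ∈ T,
      (if τ ⊆ σ then Dv p i τ * ((faceSgn τ σ : ℝ) * z σ) else 0) = g σ := by
    intro σ hσF
    have hσ : σ.card = m + 1 := (Finset.mem_filter.1 hσF).2
    have hset : T.filter (fun τ => τ ⊆ σ) =
        (σ.filter (fun w => v ∉ σ.erase w)).image σ.erase := by
      ext τ
      simp only [hT, Finset.mem_filter, Finset.mem_powersetCard, Finset.mem_image]
      constructor
      · rintro ⟨⟨⟨-, hcard⟩, hvτ⟩, hτσ⟩
        have hc1 : (σ \ τ).card = 1 := by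
          rw [Finset.card_sdiff_of_subset hτσ, hσ, hcard]
          omega
        obtain ⟨w, hw⟩ := Finset.card_eq_one.1 hc1
        have hwσ : w ∈ σ := by
          have : w ∈ σ \ τ := hw ▸ Finset.mem_singleton_self w
          exact (Finset.mem_sdiff.1 this).1
        have hτw : σ.erase w = τ := by
          rw [Finset.erase_eq, ← hw, Finset.sdiff_sdiff_self_left,
            Finset.inter_eq_right.2 hτσ]
        exact ⟨w, ⟨hwσ, hτw ▸ hvτ⟩, hτw⟩
      · rintro ⟨w, hw, rfl⟩
        obtain ⟨hwσ, hvw⟩ := hw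
        refine ⟨⟨⟨Finset.subset_univ _, ?_⟩, hvw⟩, Finset.erase_subset _ _⟩
        rw [Finset.card_erase_of_mem hwσ, hσ]
        omega
    rw [← Finset.sum_filter, hset,
      Finset.sum_image (fun w hw w' hw' h =>
        (Finset.erase_inj σ (Finset.mem_filter.1 hw).1).1 h)]
    by_cases hv : v ∈ σ
    · have hfil : σ.filter (fun w => v ∉ σ.erase w) = {v} := by
        ext w
        simp only [Finset.mem_filter, Finset.mem_erase, Finset.mem_singleton]
        constructor
        · rintro ⟨hwσ, hnot⟩
          by_contra hne
          exact hnot ⟨fun h => hne h.symm, hv⟩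
        · rintro rfl
          exact ⟨hv, fun h => h.1 rfl⟩
      rw [hfil, Finset.sum_singleton]
      simp only [hg]
      rw [dif_pos hv]
      ring
    · have hfil : σ.filter (fun w => v ∉ σ.erase w) = σ := by
        refine Finset.filter_true_of_mem (fun w hw h => hv (Finset.mem_of_mem_erase h))
      rw [hfil]
      simp only [hg]
      rw [dif_neg hv]
      have : ∀ w ∈ σ, Dv p i (σ.erase w) * ((faceSgn (σ.erase w) σ : ℝ) * z σ) =
          ((faceSgn (σ.erase w) σ : ℝ) * Dv p i (σ.erase w)) * z σ := fun w _ => by ring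
      rw [Finset.sum_congr rfl this, ← Finset.sum_mul, sum_faceSgn_Dv p i σ hσ, zero_mul]
  have hGsum : ∑ σ ∈ F, g σ = 0 := by
    rw [← Finset.sum_congr rfl hinner, hB2]
  -- now relate the target to ∑ g
  have hmain : ∀ σ : {σ : Finset α // σ ∈ K ∧ σ.card = m+1},
      volMatrix (m+1) K p (v, i) σ * z σ.1 = (-(-1:ℝ)^(i:ℕ)) * g σ.1 := by
    rintro ⟨σ, hσK, hσ⟩
    by_cases hv : v ∈ σ
    · rw [volMatrix_apply_mem K p v i σ hσK hσ hv, hg]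
      simp only [dif_pos hv]
      rw [faceSgn_erase σ hσ v hv]
      push_cast
      set c := (((σ.orderIsoOfFin hσ).symm ⟨v, hv⟩ : Fin (m+1)) : ℕ) with hc
      have h2 : (-1:ℝ)^(i:ℕ) * (-1)^(i:ℕ) = 1 := by rw [← mul_pow]; norm_num
      have h3 : (-(-1:ℝ)^(i:ℕ)) * ((-1:ℝ)^(c+1)) = (-1:ℝ)^((i:ℕ) + c) := by
        rw [pow_add, pow_add, pow_one]
        calc (-(-1:ℝ)^(i:ℕ)) * ((-1:ℝ)^c * (-1)) = ((-1:ℝ)^(i:ℕ) * (-1)^(i:ℕ)) *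
            ((-1:ℝ)^(i:ℕ) * (-1)^c) := by rw [h2]; ring
          _ = (-1:ℝ)^(i:ℕ) * (-1)^c := by rw [h2, one_mul]
      rw [← h3]
      ring
    · rw [volMatrix_apply_not_mem K p v i ⟨σ, hσK, hσ⟩ hv, hg]
      simp only [dif_neg hv]
      ring
  rw [Finset.sum_congr rfl (fun σ _ => hmain σ), ← Finset.mul_sum,
    ← Finset.sum_subtype F (fun σ => by rw [hF]; exact Finset.mem_filter) g,
    hGsum, mul_zero]

end Core

set_option maxHeartbeats 1600000 in
/-- equation (3) in Lemma 3.4: any real `(d-1)`-cycle of `K` lies in the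
kernel of the volume-rigidity matrix. -/
theorem volMatrix_mulVec_cycle_eq_zero (d n : ℕ) (hd : 2 ≤ d)
    (K : Finset (Finset (Fin n))) (hK : IsComplex K) (hpure : PureCx d K)
    (p : Fin n → Fin (d - 1) → ℝ) (z : Finset (Fin n) → ℝ)
    (hz : BoundaryZeroR d K z) :
    ∀ vi : Fin n × Fin (d - 1),
      ∑ σ : {σ : Finset (Fin n) // σ ∈ K ∧ σ.card = d},
        volMatrix d K p vi σ * z σ.1 = 0 := by
  intro vi
  obtain ⟨m, rfl⟩ : ∃ m, d = m + 1 := ⟨d - 1, by omega⟩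
  exact core_cycle K p z hz vi.1 vi.2
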